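/- Let A be a Hopf algebra over a commutative ring K with comultiplication Δ, antipode S, and adjoint action ad(x)(y) = Σ x₍₁₎ · y · S(x₍₂₎). Let n ∈ ℕ, let π : A → Matrix n n K be a K-algebra homomorphism, and let a ∈ A⊗A satisfy a · Δ(x) = Δ(x) · a for all x ∈ A. Set a_{ij} = (π_{ij} ⊗ id)(a) ∈ A, where π_{ij}(x) denotes the (i,j) entry of π(x). Then for all x ∈ A and all indices i, j: ad(x)(a_{ij}) = Σ_{k,l} (Σ π_{ik}(S(x₍₁₎)) · π_{lj}(x₍₂₎)) • a_{kl}, where the inner sum is the Sweedler sum over Δ(x). In other words, the elements a_{ij} span an ad-submodule of A on which x acts through the matrix coefficients of the representation π* ⊗ π, with π*_{ki}(x) = π_{ik}(S(x)). -/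

import Mathlib

open TensorProduct

/-- The adjoint action of a Hopf algebra `A` on itself:
`ad x y = Σ x₍₁₎ · y · S(x₍₂₎)`, i.e. the image of `Δ(x)` under the linear map
`A ⊗ A → A` induced by `u ⊗ v ↦ u · y · S(v)`. -/
noncomputable def hopfAd (K : Type*) {A : Type*} [CommRing K] [Ring A] [HopfAlgebra K A]
    (x y : A) : A :=
  TensorProduct.lift
    (((LinearMap.mul K A) ∘ₗ (LinearMap.mulRight K y)).compl₂ (HopfAlgebra.antipode (R := K)))
    (Coalgebra.comul x)

/-- `(π_{ij} ⊗ id)(a) ∈ A` for `a ∈ A ⊗ A`: apply the matrix-entry functional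
`π_{ij} : A → K`, `x ↦ (π x) i j`, to the first tensor factor (identifying `K ⊗ A ≅ A`). -/
noncomputable def matrixCoeffTensor (K : Type*) {A n : Type*} [CommRing K] [Ring A]
    [HopfAlgebra K A] [Fintype n] [DecidableEq n]
    (π : A →ₐ[K] Matrix n n K) (a : A ⊗[K] A) (i j : n) : A :=
  TensorProduct.lift
    ((LinearMap.lsmul K A) ∘ₗ (Matrix.entryLinearMap K K i j) ∘ₗ π.toLinearMap) a

/-- The Sweedler sum `Σ π_{ik}(S(x₍₁₎)) · π_{lj}(x₍₂₎) ∈ K`, i.e. the image of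
`Δ(x) ∈ A ⊗ A` under the linear functional induced by
`u ⊗ v ↦ (π (S u)) i k · (π v) l j`.  These are the matrix coefficients of the
representation `π* ⊗ π`, where `π*_{ki}(x) = π_{ik}(S(x))` is the dual representation. -/
noncomputable def dualRepCoeff (K : Type*) {A n : Type*} [CommRing K] [Ring A]
    [HopfAlgebra K A] [Fintype n] [DecidableEq n]
    (π : A →ₐ[K] Matrix n n K) (i k l j : n) : A ⊗[K] A →ₗ[K] K :=
  TensorProduct.lift
    (((LinearMap.mul K K) ∘ₗ (Matrix.entryLinearMap K K i k) ∘ₗ π.toLinearMap ∘ₗ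
        (HopfAlgebra.antipode (R := K))).compl₂
      ((Matrix.entryLinearMap K K l j) ∘ₗ π.toLinearMap))

section AdAuxSection
set_option linter.unusedSectionVars false
set_option maxHeartbeats 1000000
open Coalgebra HopfAlgebra LinearMap

namespace AdAux

section Conv

variable {K A B : Type*} [CommRing K] [Ring A] [HopfAlgebra K A]
  [Ring B] [Algebra K B]

/-- Convolution product on linear maps from a coalgebra to an algebra. -/
noncomputable def conv (f g : A →ₗ[K] B) : A →ₗ[K] B :=
  LinearMap.mul' K B ∘ₗ TensorProduct.map f g ∘ₗ (Coalgebra.comul (R := K) (A := A))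

lemma conv_repr {x : A} (r : Coalgebra.Repr K x (A × A)) (f g : A →ₗ[K] B) :
    conv f g x = ∑ i ∈ r.index, f (r.left i) * g (r.right i) := by
  simp [conv, ← r.eq, map_sum]

lemma sum_counit_smul {x : A} (r : Coalgebra.Repr K x (A × A)) :
    ∑ i ∈ r.index, Coalgebra.counit (R := K) (r.left i) • r.right i = x := by
  calc ∑ i ∈ r.index, Coalgebra.counit (R := K) (r.left i) • r.right i
      = TensorProduct.lid K A (∑ i ∈ r.index,
          Coalgebra.counit (R := K) (r.left i) ⊗ₜ[K] r.right i) := by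
        rw [map_sum]; simp
    _ = TensorProduct.lid K A (1 ⊗ₜ[K] x) := by rw [Coalgebra.sum_counit_tmul_eq r]
    _ = x := by simp

lemma conv_assoc (f g h : A →ₗ[K] B) : conv (conv f g) h = conv f (conv g h) := by
  ext x
  set r := ℛ K x with hr
  set a₁ : ∀ i : A × A, Coalgebra.Repr K (r.left i) (A × A) := fun i => ℛ K (r.left i) with ha₁
  set a₂ : ∀ i : A × A, Coalgebra.Repr K (r.right i) (A × A) := fun i => ℛ K (r.right i) with ha₂
  have key := congrArg (LinearMap.mul' K B ∘ₗ
      TensorProduct.map f (LinearMap.mul' K B ∘ₗ TensorProduct.map g h))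
    (Coalgebra.sum_tmul_tmul_eq r a₁ a₂)
  simp only [map_sum, LinearMap.comp_apply, TensorProduct.map_tmul,
    LinearMap.mul'_apply] at key
  rw [conv_repr r, conv_repr r]
  calc ∑ i ∈ r.index, conv f g (r.left i) * h (r.right i)
      = ∑ i ∈ r.index, ∑ j ∈ (a₁ i).index,
          f ((a₁ i).left j) * (g ((a₁ i).right j) * h (r.right i)) := by
        refine Finset.sum_congr rfl fun i _ => ?_
        rw [conv_repr (a₁ i), Finset.sum_mul]
        simp [mul_assoc]
    _ = ∑ i ∈ r.index, ∑ j ∈ (a₂ i).index,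
          f (r.left i) * (g ((a₂ i).left j) * h ((a₂ i).right j)) := key
    _ = ∑ i ∈ r.index, f (r.left i) * conv g h (r.right i) := by
        refine Finset.sum_congr rfl fun i _ => ?_
        rw [conv_repr (a₂ i), Finset.mul_sum]

/-- The unit of the convolution algebra. -/
noncomputable def convOne : A →ₗ[K] B :=
  Algebra.linearMap K B ∘ₗ (Coalgebra.counit (R := K) (A := A))

lemma one_conv (f : A →ₗ[K] B) : conv convOne f = f := by
  ext x
  rw [conv_repr (ℛ K x)]
  simp only [convOne, LinearMap.comp_apply, Algebra.linearMap_apply, ← Algebra.smul_def,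
    ← map_smul, ← map_sum, sum_counit_smul]

lemma conv_one (f : A →ₗ[K] B) : conv f convOne = f := by
  ext x
  rw [conv_repr (ℛ K x)]
  have h := Coalgebra.sum_tmul_counit_eq (ℛ K x)
  apply_fun (TensorProduct.rid K A) at h
  simp only [map_sum, TensorProduct.rid_tmul, one_smul] at h
  simp only [convOne, LinearMap.comp_apply, Algebra.linearMap_apply, ← Algebra.commutes,
    ← Algebra.smul_def, ← map_smul, ← map_sum, h]

end Conv

section Maps

variable (K A : Type*) [CommRing K] [Ring A] [HopfAlgebra K A]

/-- `x ↦ 1 ⊗ x`. -/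
noncomputable def αmap : A →ₗ[K] A ⊗[K] A := TensorProduct.mk K A A 1
/-- `x ↦ x ⊗ 1`. -/
noncomputable def δmap : A →ₗ[K] A ⊗[K] A := (TensorProduct.mk K A A).flip 1
/-- `x ↦ 1 ⊗ S x`. -/
noncomputable def βmap : A →ₗ[K] A ⊗[K] A := αmap K A ∘ₗ HopfAlgebra.antipode (R := K)
/-- `x ↦ S x ⊗ 1`. -/
noncomputable def γmap : A →ₗ[K] A ⊗[K] A := δmap K A ∘ₗ HopfAlgebra.antipode (R := K)
/-- `x ↦ ε x • a`. -/
noncomputable def cmap (a : A ⊗[K] A) : A →ₗ[K] A ⊗[K] A :=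
  LinearMap.smulRight (Coalgebra.counit (R := K) (A := A)) a

variable {K A}

@[simp] lemma αmap_apply (x : A) : αmap K A x = 1 ⊗ₜ[K] x := rfl
@[simp] lemma δmap_apply (x : A) : δmap K A x = x ⊗ₜ[K] 1 := rfl
@[simp] lemma βmap_apply (x : A) : βmap K A x = 1 ⊗ₜ[K] (antipode (R := K) x) := rfl
@[simp] lemma γmap_apply (x : A) : γmap K A x = (antipode (R := K) x) ⊗ₜ[K] 1 := rfl
@[simp] lemma cmap_apply (a : A ⊗[K] A) (x : A) :
    cmap K A a x = Coalgebra.counit (R := K) x • a := rfl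

lemma conv_δ_α : conv (δmap K A) (αmap K A) = (Coalgebra.comul : A →ₗ[K] A ⊗[K] A) := by
  ext x
  rw [conv_repr (ℛ K x)]
  simp only [δmap_apply, αmap_apply, Algebra.TensorProduct.tmul_mul_tmul, one_mul, mul_one]
  exact (ℛ K x).eq

lemma conv_α_β : conv (αmap K A) (βmap K A) = (convOne : A →ₗ[K] A ⊗[K] A) := by
  ext x
  rw [conv_repr (ℛ K x)]
  simp only [αmap_apply, βmap_apply, Algebra.TensorProduct.tmul_mul_tmul, one_mul]
  rw [← TensorProduct.tmul_sum, HopfAlgebra.sum_mul_antipode_eq_smul (ℛ K x)]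
  simp [convOne, Algebra.algebraMap_eq_smul_one, TensorProduct.tmul_smul,
    Algebra.TensorProduct.one_def]

lemma conv_γ_δ : conv (γmap K A) (δmap K A) = (convOne : A →ₗ[K] A ⊗[K] A) := by
  ext x
  rw [conv_repr (ℛ K x)]
  simp only [γmap_apply, δmap_apply, Algebra.TensorProduct.tmul_mul_tmul, one_mul, mul_one]
  rw [← TensorProduct.sum_tmul, HopfAlgebra.sum_antipode_mul_eq_smul (ℛ K x)]
  simp [convOne, Algebra.algebraMap_eq_smul_one, TensorProduct.smul_tmul,
    Algebra.TensorProduct.one_def, TensorProduct.tmul_smul]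

lemma conv_c_comul (a : A ⊗[K] A)
    (ha : ∀ x : A, a * Coalgebra.comul x = Coalgebra.comul x * a) :
    conv (cmap K A a) (Coalgebra.comul : A →ₗ[K] A ⊗[K] A)
      = conv (Coalgebra.comul : A →ₗ[K] A ⊗[K] A) (cmap K A a) := by
  ext x
  rw [conv_repr (ℛ K x), conv_repr (ℛ K x)]
  have h1 : ∑ i ∈ (ℛ K x).index, cmap K A a ((ℛ K x).left i)
      * (Coalgebra.comul ((ℛ K x).right i) : A ⊗[K] A) = a * Coalgebra.comul x :=
    calc ∑ i ∈ (ℛ K x).index, cmap K A a ((ℛ K x).left i)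
        * (Coalgebra.comul ((ℛ K x).right i) : A ⊗[K] A)
        = ∑ i ∈ (ℛ K x).index, ((LinearMap.mulLeft K a) ∘ₗ
            (Coalgebra.comul : A →ₗ[K] A ⊗[K] A))
            (Coalgebra.counit (R := K) ((ℛ K x).left i) • (ℛ K x).right i) := by
          simp [smul_mul_assoc]
      _ = ((LinearMap.mulLeft K a) ∘ₗ (Coalgebra.comul : A →ₗ[K] A ⊗[K] A))
            (∑ i ∈ (ℛ K x).index,
              Coalgebra.counit (R := K) ((ℛ K x).left i) • (ℛ K x).right i) := by
          rw [map_sum]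
      _ = a * Coalgebra.comul x := by rw [sum_counit_smul]; rfl
  have h2 : ∑ i ∈ (ℛ K x).index, (Coalgebra.comul ((ℛ K x).left i) : A ⊗[K] A)
      * cmap K A a ((ℛ K x).right i) = Coalgebra.comul x * a := by
    have hs : ∑ i ∈ (ℛ K x).index,
        Coalgebra.counit (R := K) ((ℛ K x).right i) • (ℛ K x).left i = x := by
      have h := Coalgebra.sum_tmul_counit_eq (ℛ K x)
      calc ∑ i ∈ (ℛ K x).index,
            Coalgebra.counit (R := K) ((ℛ K x).right i) • (ℛ K x).left i
          = TensorProduct.rid K A (∑ i ∈ (ℛ K x).index,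
              (ℛ K x).left i ⊗ₜ[K] Coalgebra.counit (R := K) ((ℛ K x).right i)) := by
            rw [map_sum]; simp
        _ = TensorProduct.rid K A (x ⊗ₜ[K] 1) := by rw [h]
        _ = x := by simp
    calc ∑ i ∈ (ℛ K x).index, (Coalgebra.comul ((ℛ K x).left i) : A ⊗[K] A)
        * cmap K A a ((ℛ K x).right i)
        = ∑ i ∈ (ℛ K x).index, ((LinearMap.mulRight K a) ∘ₗ
            (Coalgebra.comul : A →ₗ[K] A ⊗[K] A))
            (Coalgebra.counit (R := K) ((ℛ K x).right i) • (ℛ K x).left i) := by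
          simp [mul_smul_comm]
      _ = ((LinearMap.mulRight K a) ∘ₗ (Coalgebra.comul : A →ₗ[K] A ⊗[K] A))
            (∑ i ∈ (ℛ K x).index,
              Coalgebra.counit (R := K) ((ℛ K x).right i) • (ℛ K x).left i) := by
          rw [map_sum]
      _ = Coalgebra.comul x * a := by rw [hs]; rfl
  rw [h1, h2, ha]

lemma main_conv_eq (a : A ⊗[K] A)
    (ha : ∀ x : A, a * Coalgebra.comul x = Coalgebra.comul x * a) :
    conv (αmap K A) (conv (cmap K A a) (βmap K A))
      = conv (γmap K A) (conv (cmap K A a) (δmap K A)) := by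
  have key : conv (cmap K A a) (conv (δmap K A) (αmap K A))
      = conv (conv (δmap K A) (αmap K A)) (cmap K A a) := by
    rw [conv_δ_α]; exact conv_c_comul a ha
  symm
  calc conv (γmap K A) (conv (cmap K A a) (δmap K A))
      = conv (conv (γmap K A) (conv (cmap K A a) (δmap K A)))
          (conv (αmap K A) (βmap K A)) := by
        rw [conv_α_β, conv_one]
    _ = conv (γmap K A) (conv (conv (cmap K A a) (δmap K A))
          (conv (αmap K A) (βmap K A))) := by
        rw [conv_assoc]
    _ = conv (γmap K A) (conv (cmap K A a)
          (conv (δmap K A) (conv (αmap K A) (βmap K A)))) := by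
        rw [conv_assoc]
    _ = conv (γmap K A) (conv (cmap K A a)
          (conv (conv (δmap K A) (αmap K A)) (βmap K A))) := by
        rw [← conv_assoc (δmap K A) (αmap K A) (βmap K A)]
    _ = conv (γmap K A) (conv (conv (cmap K A a)
          (conv (δmap K A) (αmap K A))) (βmap K A)) := by
        rw [← conv_assoc (cmap K A a)]
    _ = conv (γmap K A) (conv (conv (conv (δmap K A) (αmap K A))
          (cmap K A a)) (βmap K A)) := by
        rw [key]
    _ = conv (γmap K A) (conv (conv (δmap K A) (αmap K A))
          (conv (cmap K A a) (βmap K A))) := by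
        rw [conv_assoc]
    _ = conv (γmap K A) (conv (δmap K A)
          (conv (αmap K A) (conv (cmap K A a) (βmap K A)))) := by
        rw [conv_assoc]
    _ = conv (conv (γmap K A) (δmap K A))
          (conv (αmap K A) (conv (cmap K A a) (βmap K A))) := by
        rw [← conv_assoc]
    _ = conv (αmap K A) (conv (cmap K A a) (βmap K A)) := by
        rw [conv_γ_δ, one_conv]

lemma conv_c_β (a : A ⊗[K] A) (y : A) :
    conv (cmap K A a) (βmap K A) y = a * (1 ⊗ₜ[K] antipode (R := K) y) := by
  rw [conv_repr (ℛ K y)]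
  calc ∑ i ∈ (ℛ K y).index, cmap K A a ((ℛ K y).left i) * βmap K A ((ℛ K y).right i)
      = ∑ i ∈ (ℛ K y).index, ((LinearMap.mulLeft K a) ∘ₗ βmap K A)
          (Coalgebra.counit (R := K) ((ℛ K y).left i) • (ℛ K y).right i) := by
        simp [smul_mul_assoc, mul_smul_comm]
    _ = ((LinearMap.mulLeft K a) ∘ₗ βmap K A)
          (∑ i ∈ (ℛ K y).index,
            Coalgebra.counit (R := K) ((ℛ K y).left i) • (ℛ K y).right i) := by
        rw [map_sum]
    _ = a * (1 ⊗ₜ[K] antipode (R := K) y) := by rw [sum_counit_smul]; rfl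

lemma conv_c_δ (a : A ⊗[K] A) (y : A) :
    conv (cmap K A a) (δmap K A) y = a * (y ⊗ₜ[K] 1) := by
  rw [conv_repr (ℛ K y)]
  calc ∑ i ∈ (ℛ K y).index, cmap K A a ((ℛ K y).left i) * δmap K A ((ℛ K y).right i)
      = ∑ i ∈ (ℛ K y).index, ((LinearMap.mulLeft K a) ∘ₗ δmap K A)
          (Coalgebra.counit (R := K) ((ℛ K y).left i) • (ℛ K y).right i) := by
        simp [smul_mul_assoc, mul_smul_comm]
    _ = ((LinearMap.mulLeft K a) ∘ₗ δmap K A)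
          (∑ i ∈ (ℛ K y).index,
            Coalgebra.counit (R := K) ((ℛ K y).left i) • (ℛ K y).right i) := by
        rw [map_sum]
    _ = a * (y ⊗ₜ[K] 1) := by rw [sum_counit_smul]; rfl

end Maps

section Matrix

variable {K A : Type*} [CommRing K] [Ring A] [HopfAlgebra K A]
  {n : Type*} [Fintype n] [DecidableEq n]

noncomputable def Glin (π : A →ₐ[K] Matrix n n K) (i j : n) : A ⊗[K] A →ₗ[K] A :=
  TensorProduct.lift
    ((LinearMap.lsmul K A) ∘ₗ (Matrix.entryLinearMap K K i j) ∘ₗ π.toLinearMap)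

@[simp] lemma Glin_tmul (π : A →ₐ[K] Matrix n n K) (i j : n) (p q : A) :
    Glin π i j (p ⊗ₜ[K] q) = (π p) i j • q := rfl

lemma Gmul (π : A →ₐ[K] Matrix n n K) (i j : n) (u v : A) (t : A ⊗[K] A) :
    Glin π i j ((1 ⊗ₜ[K] u) * t * (1 ⊗ₜ[K] v)) = u * Glin π i j t * v := by
  induction t using TensorProduct.induction_on with
  | zero => simp
  | tmul p q =>
      simp [Algebra.TensorProduct.tmul_mul_tmul, mul_smul_comm, smul_mul_assoc, mul_assoc]
  | add s t hs ht => simp [mul_add, add_mul, hs, ht]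

lemma Gside (π : A →ₐ[K] Matrix n n K) (i j : n) (w v : A) (t : A ⊗[K] A) :
    Glin π i j ((w ⊗ₜ[K] 1) * t * (v ⊗ₜ[K] 1))
      = ∑ k : n, ∑ l : n, ((π w) i k * (π v) l j) • Glin π k l t := by
  induction t using TensorProduct.induction_on with
  | zero => simp
  | tmul p q =>
      simp only [Algebra.TensorProduct.tmul_mul_tmul, one_mul, mul_one, Glin_tmul,
        map_mul, Matrix.mul_apply, Finset.sum_mul, Finset.sum_smul, smul_smul]
      rw [Finset.sum_comm]
      refine Finset.sum_congr rfl fun l _ => Finset.sum_congr rfl fun k _ => ?_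
      ring_nf
  | add s t hs ht =>
      simp only [mul_add, add_mul, map_add, hs, ht, smul_add, Finset.sum_add_distrib]

end Matrix

end AdAux

end AdAuxSection

open AdAux Coalgebra HopfAlgebra LinearMap

/-- let `A` be a Hopf algebra over `K`, `π : A → Matrix n n K` a `K`-algebra
homomorphism and `a ∈ A ⊗ A` an element commuting with all coproducts `Δ(x)`.  Setting
`a_{ij} = (π_{ij} ⊗ id)(a)`, the adjoint action satisfies
`ad x (a_{ij}) = Σ_{k,l} (Σ π_{ik}(S(x₍₁₎)) · π_{lj}(x₍₂₎)) • a_{kl}`: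
the elements `a_{ij}` span an ad-submodule of `A` on which `x` acts through the matrix
coefficients of `π* ⊗ π`. -/
theorem ad_matrixCoeffTensor {K A n : Type*} [CommRing K] [Ring A] [HopfAlgebra K A]
    [Fintype n] [DecidableEq n]
    (π : A →ₐ[K] Matrix n n K) (a : A ⊗[K] A)
    (ha : ∀ x : A, a * Coalgebra.comul x = Coalgebra.comul x * a)
    (x : A) (i j : n) :
    hopfAd K x (matrixCoeffTensor K π a i j)
      = ∑ k : n, ∑ l : n,
          dualRepCoeff K π i k l j (Coalgebra.comul x) • matrixCoeffTensor K π a k l := by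
  classical
  set r := ℛ K x with hr
  have hGdef : ∀ k l, matrixCoeffTensor K π a k l = Glin π k l a := fun _ _ => rfl
  have hL : hopfAd K x (matrixCoeffTensor K π a i j)
      = Glin π i j (conv (αmap K A) (conv (cmap K A a) (βmap K A)) x) := by
    rw [conv_repr r, map_sum]
    show TensorProduct.lift _ (Coalgebra.comul x) = _
    rw [← r.eq, map_sum]
    refine Finset.sum_congr rfl fun s _ => ?_
    rw [αmap_apply, conv_c_β, ← mul_assoc, Gmul]
    rfl
  have hD : ∀ k l : n, dualRepCoeff K π i k l j (Coalgebra.comul x)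
      = ∑ s ∈ r.index,
          (π (antipode (R := K) (r.left s))) i k * (π (r.right s)) l j := by
    intro k l
    rw [show (Coalgebra.comul x : A ⊗[K] A) = ∑ s ∈ r.index, r.left s ⊗ₜ[K] r.right s
        from r.eq.symm, map_sum]
    rfl
  calc hopfAd K x (matrixCoeffTensor K π a i j)
      = Glin π i j (conv (αmap K A) (conv (cmap K A a) (βmap K A)) x) := hL
    _ = Glin π i j (conv (γmap K A) (conv (cmap K A a) (δmap K A)) x) := by
        rw [main_conv_eq a ha]
    _ = ∑ s ∈ r.index, ∑ k : n, ∑ l : n,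
          ((π (antipode (R := K) (r.left s))) i k * (π (r.right s)) l j)
            • Glin π k l a := by
        rw [conv_repr r, map_sum]
        refine Finset.sum_congr rfl fun s _ => ?_
        rw [γmap_apply, conv_c_δ, ← mul_assoc, Gside]
    _ = ∑ k : n, ∑ l : n, (∑ s ∈ r.index,
          (π (antipode (R := K) (r.left s))) i k * (π (r.right s)) l j)
            • Glin π k l a := by
        rw [Finset.sum_comm]
        refine Finset.sum_congr rfl fun k _ => ?_
        rw [Finset.sum_comm]
        refine Finset.sum_congr rfl fun l _ => ?_
        rw [Finset.sum_smul]
    _ = ∑ k : n, ∑ l : n,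
          dualRepCoeff K π i k l j (Coalgebra.comul x) • matrixCoeffTensor K π a k l := by
        refine Finset.sum_congr rfl fun k _ => Finset.sum_congr rfl fun l _ => ?_
        rw [hD k l, hGdef k l]
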